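/- Let M, N be n×d real matrices with orthonormal columns. Then there exists an orthogonal matrix Ω ∈ O(d) such that ‖MΩ - N‖ ≤ ‖M Mᵀ - N Nᵀ‖, where ‖·‖ is the Frobenius norm. -/

import Mathlib

open Matrix

open Filter Topology

variable {d : ℕ}



lemma psd_smul {c : ℝ} (hc : 0 ≤ c) {P : Matrix (Fin d) (Fin d) ℝ} (hP : P.PosSemidef) :
    (c • P).PosSemidef := by
  refine ⟨?_, fun x => ?_⟩
  · unfold Matrix.IsHermitian
    rw [conjTranspose_smul, hP.1]
    simp
  · exact (hP.smul hc).2 x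

lemma trace_sq_le {P : Matrix (Fin d) (Fin d) ℝ} (hP : P.PosSemidef)
    (h1 : (1 - P * P).PosSemidef) : trace (P * P) ≤ trace P := by
  have hH := hP.1
  -- eigenvalue bounds
  have key : ∀ i, hH.eigenvalues i ^ 2 ≤ hH.eigenvalues i := by
    intro i
    have hnn := hP.eigenvalues_nonneg i
    have hv := hH.mulVec_eigenvectorBasis i
    have hnorm : (⇑(hH.eigenvectorBasis i)) ⬝ᵥ (⇑(hH.eigenvectorBasis i)) = 1 := by
      have h := hH.eigenvectorBasis.orthonormal.1 i
      have : (inner ℝ (hH.eigenvectorBasis i) (hH.eigenvectorBasis i) : ℝ) = 1 := by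
        rw [real_inner_self_eq_norm_sq, h]; norm_num
      rw [← this, EuclideanSpace.inner_eq_star_dotProduct]; simp
    have hq := h1.dotProduct_mulVec_nonneg (⇑(hH.eigenvectorBasis i))
    have hmul : (1 - P * P) *ᵥ ⇑(hH.eigenvectorBasis i)
        = (1 - hH.eigenvalues i ^ 2) • ⇑(hH.eigenvectorBasis i) := by
      rw [sub_mulVec, one_mulVec, ← mulVec_mulVec, hv, mulVec_smul, hv, smul_smul, sub_smul,
        one_smul, ← pow_two]
    rw [hmul] at hq
    simp only [dotProduct_smul, RCLike.re_to_real, star_trivial] at hq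
    rw [hnorm, smul_eq_mul, mul_one] at hq
    nlinarith
  have htr : trace P = ∑ i, hH.eigenvalues i := by
    conv_lhs => rw [hH.spectral_theorem, Unitary.conjStarAlgAut_apply]
    rw [trace_mul_cycle]
    rw [show (star (hH.eigenvectorUnitary : Matrix (Fin d) (Fin d) ℝ)) *
        (hH.eigenvectorUnitary : Matrix (Fin d) (Fin d) ℝ) = 1 from Unitary.coe_star_mul_self _]
    simp [trace_diagonal]
  have htr2 : trace (P * P) = ∑ i, hH.eigenvalues i ^ 2 := by
    conv_lhs => rw [hH.spectral_theorem, Unitary.conjStarAlgAut_apply]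
    rw [show ((hH.eigenvectorUnitary : Matrix (Fin d) (Fin d) ℝ) * _ * _) *
        ((hH.eigenvectorUnitary : Matrix (Fin d) (Fin d) ℝ) * _ * _)
        = (hH.eigenvectorUnitary : Matrix (Fin d) (Fin d) ℝ) *
          (diagonal (RCLike.ofReal ∘ hH.eigenvalues) * diagonal (RCLike.ofReal ∘ hH.eigenvalues)) *
          (star (hH.eigenvectorUnitary : Matrix (Fin d) (Fin d) ℝ)) from by
      rw [diagonal_mul_diagonal]
      rw [show ∀ X Y Z W V : Matrix (Fin d) (Fin d) ℝ, X*Y*Z*(X*W*V) = X*Y*(Z*X)*W*V from by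
        intros; noncomm_ring]
      rw [Unitary.coe_star_mul_self, mul_one]
      rw [show ∀ X Y W V : Matrix (Fin d) (Fin d) ℝ, X*Y*W*V = X*(Y*W)*V from by
        intros; noncomm_ring]
      rw [diagonal_mul_diagonal]]
    rw [trace_mul_cycle, ← mul_assoc, Unitary.coe_star_mul_self, one_mul]
    simp [trace_diagonal, pow_two]
  rw [htr, htr2]
  exact Finset.sum_le_sum fun i _ => key i


lemma exists_orth_inv {B : Matrix (Fin d) (Fin d) ℝ} (hdet : IsUnit B.det)
    (h1 : (1 - Bᵀ * B).PosSemidef) :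
    ∃ Ω : Matrix (Fin d) (Fin d) ℝ, Ω * Ωᵀ = 1 ∧ trace (Bᵀ * B) ≤ trace (Ωᵀ * B) := by
  have hpsd : (Bᵀ * B).PosSemidef := by
    have := posSemidef_conjTranspose_mul_self B
    rwa [conjTranspose_eq_transpose_of_trivial] at this
  open scoped MatrixOrder in
  set P := CFC.sqrt (Bᵀ * B) with hPdef
  have hPP : P * P = Bᵀ * B := by
    open scoped MatrixOrder in exact CFC.sqrt_mul_sqrt_self _ hpsd.nonneg
  have hPpsd : P.PosSemidef := by
    open scoped MatrixOrder in exact (CFC.sqrt_nonneg _).posSemidef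
  have hPsym : Pᵀ = P := by
    rw [← conjTranspose_eq_transpose_of_trivial]; exact hPpsd.1
  have hPdet : IsUnit P.det := by
    have h2 : P.det * P.det = B.det * B.det := by
      have := congrArg Matrix.det hPP
      rwa [det_mul, det_mul, det_transpose] at this
    have : IsUnit (P.det * P.det) := h2 ▸ hdet.mul hdet
    exact isUnit_of_mul_isUnit_left this
  refine ⟨B * P⁻¹, ?_, ?_⟩
  · rw [mul_eq_one_comm]
    have : (B * P⁻¹)ᵀ = P⁻¹ * Bᵀ := by
      rw [transpose_mul, transpose_nonsing_inv, hPsym]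
    rw [this, mul_assoc, ← mul_assoc Bᵀ, ← hPP, ← mul_assoc, ← mul_assoc,
      nonsing_inv_mul _ hPdet, one_mul, mul_nonsing_inv _ hPdet]
  · have hT : (B * P⁻¹)ᵀ * B = P⁻¹ * (P * P) := by
      rw [transpose_mul, transpose_nonsing_inv, hPsym, mul_assoc, hPP]
    rw [hT, ← mul_assoc, nonsing_inv_mul _ hPdet, one_mul]
    rw [← hPP]
    exact trace_sq_le hPpsd (by rwa [hPP])



lemma eval_charpoly' (A : Matrix (Fin d) (Fin d) ℝ) (t : ℝ) :
    A.charpoly.eval t = (t • (1 : Matrix (Fin d) (Fin d) ℝ) - A).det := by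
  rw [Matrix.charpoly, eval_det, matPolyEquiv_charmatrix]
  congr 1
  simp only [Polynomial.eval_sub, Polynomial.eval_X, Polynomial.eval_C]
  congr 1
  ext i j
  simp [Matrix.scalar, Matrix.smul_apply, Matrix.one_apply, diagonal]


lemma finite_bad (A : Matrix (Fin d) (Fin d) ℝ) :
    {ε : ℝ | ¬ IsUnit (A - ε • 1).det}.Finite := by
  have hsub : {ε : ℝ | ¬ IsUnit (A - ε • 1).det} ⊆ {ε : ℝ | A.charpoly.IsRoot ε} := by
    intro ε hε
    simp only [Set.mem_setOf_eq, isUnit_iff_ne_zero, not_not] at hε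
    have : (ε • (1 : Matrix (Fin d) (Fin d) ℝ) - A).det = 0 := by
      have hneg : ε • (1 : Matrix (Fin d) (Fin d) ℝ) - A = -(A - ε • 1) := by rw [neg_sub]
      rw [hneg, Matrix.det_neg, hε, mul_zero]
    simpa [Polynomial.IsRoot, eval_charpoly'] using this
  exact (Polynomial.finite_setOf_isRoot (Matrix.charpoly_monic A).ne_zero).subset hsub


lemma entry_bound {Ω : Matrix (Fin d) (Fin d) ℝ} (h : Ω * Ωᵀ = 1) (i j : Fin d) :
    |Ω i j| ≤ 1 := by
  have h2 : ∑ l, Ω i l * Ω i l = 1 := by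
    have := congrFun (congrFun h i) i
    simpa [Matrix.mul_apply, Matrix.one_apply, transpose_apply] using this
  have hle : Ω i j * Ω i j ≤ 1 := by
    calc Ω i j * Ω i j ≤ ∑ l, Ω i l * Ω i l :=
          Finset.single_le_sum (f := fun l => Ω i l * Ω i l)
            (fun l _ => mul_self_nonneg _) (Finset.mem_univ j)
      _ = 1 := h2
  exact abs_le_one_iff_mul_self_le_one.2 hle

lemma trace_abs_le {Ω C : Matrix (Fin d) (Fin d) ℝ} (hΩ : ∀ i j, |Ω i j| ≤ 1) :
    |trace (Ωᵀ * C)| ≤ ∑ i, ∑ j, |C j i| := by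
  have h1 : trace (Ωᵀ * C) = ∑ i, ∑ j, Ω j i * C j i := by
    simp [Matrix.trace, Matrix.diag, Matrix.mul_apply, transpose_apply]
  rw [h1]
  calc |∑ i, ∑ j, Ω j i * C j i| ≤ ∑ i, |∑ j, Ω j i * C j i| :=
        Finset.abs_sum_le_sum_abs _ _
    _ ≤ ∑ i, ∑ j, |Ω j i * C j i| :=
        Finset.sum_le_sum fun i _ => Finset.abs_sum_le_sum_abs _ _
    _ ≤ ∑ i, ∑ j, |C j i| := by
        refine Finset.sum_le_sum fun i _ => Finset.sum_le_sum fun j _ => ?_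
        rw [abs_mul]
        calc |Ω j i| * |C j i| ≤ 1 * |C j i| :=
              mul_le_mul_of_nonneg_right (hΩ j i) (abs_nonneg _)
          _ = |C j i| := one_mul _


lemma perturb_psd {A : Matrix (Fin d) (Fin d) ℝ} (h1 : (1 - Aᵀ * A).PosSemidef)
    {ε : ℝ} (hε : 0 < ε) :
    (1 - ((1 + ε)⁻¹ • (A - ε • 1))ᵀ * ((1 + ε)⁻¹ • (A - ε • 1))).PosSemidef := by
  have hne : (1 + ε) ≠ 0 := by positivity
  have key : ((1+ε)*(1+ε)) • (1 : Matrix (Fin d) (Fin d) ℝ) - (Aᵀ - ε•1) * (A - ε•1)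
      = (1+ε) • (1 - Aᵀ*A) + ε • ((1+A)ᵀ*(1+A)) := by
    simp only [transpose_add, transpose_one, mul_sub, sub_mul, add_mul, mul_add,
      smul_sub, smul_add, mul_one, one_mul, smul_smul, mul_smul_comm, smul_mul_assoc]
    module
  have hBtB : ((1 + ε)⁻¹ • (A - ε • 1))ᵀ * ((1 + ε)⁻¹ • (A - ε • 1))
      = ((1+ε)⁻¹*(1+ε)⁻¹) • ((Aᵀ - ε•1) * (A - ε•1)) := by
    rw [transpose_smul, transpose_sub, transpose_smul, transpose_one, smul_mul_assoc,
      mul_smul_comm, smul_smul]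
  have hc : ((1+ε)⁻¹*(1+ε)⁻¹) * ((1+ε)*(1+ε)) = 1 := by field_simp
  have hrw : (1 : Matrix (Fin d) (Fin d) ℝ) - ((1 + ε)⁻¹ • (A - ε • 1))ᵀ * ((1 + ε)⁻¹ • (A - ε • 1))
      = ((1+ε)⁻¹*(1+ε)⁻¹) • (((1+ε)*(1+ε)) • (1 : Matrix (Fin d) (Fin d) ℝ)
          - (Aᵀ - ε•1) * (A - ε•1)) := by
    conv_rhs => rw [smul_sub, smul_smul, hc, one_smul]
    rw [hBtB]
  rw [hrw, key]
  have hpsd2 : ((1+A)ᵀ*(1+A)).PosSemidef := by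
    have := posSemidef_conjTranspose_mul_self (1+A)
    rwa [conjTranspose_eq_transpose_of_trivial] at this
  exact psd_smul (by positivity) ((psd_smul (by positivity) h1).add (psd_smul hε.le hpsd2))


lemma exists_orth_gen {A : Matrix (Fin d) (Fin d) ℝ} (h1 : (1 - Aᵀ * A).PosSemidef) :
    ∃ Ω : Matrix (Fin d) (Fin d) ℝ, Ω * Ωᵀ = 1 ∧ trace (Aᵀ * A) ≤ trace (Ωᵀ * A) := by
  classical
  set K : Set (Matrix (Fin d) (Fin d) ℝ) := {Ω | Ω * Ωᵀ = 1} with hK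
  have hKne : (1 : Matrix (Fin d) (Fin d) ℝ) ∈ K := by simp [hK]
  have hKclosed : IsClosed K := by
    have : Continuous fun Ω : Matrix (Fin d) (Fin d) ℝ => Ω * Ωᵀ :=
      continuous_id.matrix_mul continuous_id.matrix_transpose
    exact isClosed_eq this continuous_const
  have hKcomp : IsCompact K := by
    have hbig : IsCompact {Ω : Matrix (Fin d) (Fin d) ℝ | ∀ i j, Ω i j ∈ Set.Icc (-1:ℝ) 1} := by
      have h := isCompact_univ_pi (ι := Fin d)
        (s := fun _ : Fin d => Set.univ.pi fun _ : Fin d => Set.Icc (-1:ℝ) 1)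
        (fun _ => isCompact_univ_pi fun _ => isCompact_Icc)
      suffices hs : {Ω : Matrix (Fin d) (Fin d) ℝ | ∀ i j, Ω i j ∈ Set.Icc (-1:ℝ) 1} = (Set.univ.pi fun _ : Fin d => Set.univ.pi fun _ : Fin d => Set.Icc (-1:ℝ) 1 : Set (Matrix (Fin d) (Fin d) ℝ)) by
        rw [hs]; exact h
      ext Ω
      constructor
      · intro hm
        intro i _ j _
        exact Set.mem_Icc.2 (hm i j)
      · intro hm i j
        exact Set.mem_Icc.1 (hm i (Set.mem_univ i) j (Set.mem_univ j))
    refine hbig.of_isClosed_subset hKclosed ?_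
    intro Ω hΩ i j
    have := entry_bound hΩ i j
    exact Set.mem_Icc.2 (abs_le.mp this)
  have hfcont : Continuous fun Ω : Matrix (Fin d) (Fin d) ℝ => trace (Ωᵀ * A) :=
    (continuous_id.matrix_transpose.matrix_mul continuous_const).matrix_trace
  obtain ⟨Ω₀, hΩ₀K, hmax⟩ := hKcomp.exists_isMaxOn ⟨1, hKne⟩ hfcont.continuousOn
  -- choose good epsilons
  have hchoice : ∀ k : ℕ, ∃ e : ℝ, e ∈ Set.Ioo (0:ℝ) (1/(k+1)) ∧ IsUnit (A - e • 1).det := by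
    intro k
    have hIoo : (Set.Ioo (0:ℝ) (1/(k+1))).Infinite := Set.Ioo_infinite (by positivity)
    obtain ⟨e, he⟩ := (hIoo.diff (finite_bad A)).nonempty
    exact ⟨e, he.1, not_not.mp he.2⟩
  choose ε hεmem hεdet using hchoice
  set B : ℕ → Matrix (Fin d) (Fin d) ℝ := fun k => (1 + ε k)⁻¹ • (A - ε k • 1) with hBdef
  have hεpos : ∀ k, 0 < ε k := fun k => (hεmem k).1
  have hεlim : Tendsto ε atTop (𝓝 0) := by
    refine tendsto_of_tendsto_of_tendsto_of_le_of_le tendsto_const_nhds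
      tendsto_one_div_add_atTop_nhds_zero_nat (fun k => (hεpos k).le)
      (fun k => (hεmem k).2.le)
  have hBdet : ∀ k, IsUnit (B k).det := by
    intro k
    rw [hBdef]
    simp only [det_smul]
    refine ((IsUnit.pow _ ?_)).mul (hεdet k)
    have hp := hεpos k
    simpa using (by positivity : (1 + ε k)⁻¹ ≠ 0)
  have hBpsd : ∀ k, (1 - (B k)ᵀ * B k).PosSemidef := fun k => perturb_psd h1 (hεpos k)
  choose Ωs hΩs1 hΩs2 using fun k => exists_orth_inv (hBdet k) (hBpsd k)
  -- limits
  have hBlim : Tendsto B atTop (𝓝 A) := by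
    have hc : Tendsto (fun k => (1 + ε k)⁻¹) atTop (𝓝 1) := by
      have : Tendsto (fun k => 1 + ε k) atTop (𝓝 (1:ℝ)) := by
        simpa using tendsto_const_nhds.add hεlim
      simpa using this.inv₀ one_ne_zero
    have hm : Tendsto (fun k => A - ε k • (1:Matrix (Fin d) (Fin d) ℝ)) atTop (𝓝 A) := by
      have : Tendsto (fun k => ε k • (1:Matrix (Fin d) (Fin d) ℝ)) atTop (𝓝 0) := by
        simpa using hεlim.smul_const (1:Matrix (Fin d) (Fin d) ℝ)
      simpa using tendsto_const_nhds.sub this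
    simpa using hc.smul hm
  have htrlim : Tendsto (fun k => trace ((B k)ᵀ * B k)) atTop (𝓝 (trace (Aᵀ * A))) := by
    have hcont : Continuous fun X : Matrix (Fin d) (Fin d) ℝ => trace (Xᵀ * X) :=
      (continuous_id.matrix_transpose.matrix_mul continuous_id).matrix_trace
    exact (hcont.tendsto A).comp hBlim
  have herrlim : Tendsto (fun k => trace ((Ωs k)ᵀ * (B k - A))) atTop (𝓝 0) := by
    refine squeeze_zero_norm (a := fun k => ∑ i, ∑ j, |(B k - A) j i|)
      (fun k => by rw [Real.norm_eq_abs]; exact trace_abs_le (entry_bound (hΩs1 k))) ?_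
    · have hBA : Tendsto (fun k => B k - A) atTop (𝓝 0) := by
        simpa using hBlim.sub (tendsto_const_nhds (x := A))
      have : Tendsto (fun k => ∑ i : Fin d, ∑ j : Fin d, |(B k - A) j i|) atTop
          (𝓝 (∑ i : Fin d, ∑ j : Fin d, |(0 : Matrix (Fin d) (Fin d) ℝ) j i|)) := by
        refine tendsto_finset_sum _ fun i _ => tendsto_finset_sum _ fun j _ => ?_
        have hentry : Tendsto (fun k => (B k - A) j i) atTop (𝓝 ((0:Matrix (Fin d) (Fin d) ℝ) j i)) := by
          have hc : Continuous fun X : Matrix (Fin d) (Fin d) ℝ => X j i :=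
            continuous_id.matrix_elem j i
          exact (hc.tendsto _).comp hBA
        exact (continuous_abs.tendsto _).comp hentry
      simpa using this
  -- conclude
  have hineq : ∀ k, trace ((B k)ᵀ * B k) - trace ((Ωs k)ᵀ * (B k - A)) ≤ trace (Ω₀ᵀ * A) := by
    intro k
    have h2 : trace ((Ωs k)ᵀ * (B k)) = trace ((Ωs k)ᵀ * A) + trace ((Ωs k)ᵀ * (B k - A)) := by
      rw [← trace_add, ← mul_add]
      congr 2
      abel
    have h3 : trace ((Ωs k)ᵀ * A) ≤ trace (Ω₀ᵀ * A) := hmax (hΩs1 k)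
    have := hΩs2 k
    linarith [this, h2 ▸ this]
  refine ⟨Ω₀, hΩ₀K, ?_⟩
  have : Tendsto (fun k => trace ((B k)ᵀ * B k) - trace ((Ωs k)ᵀ * (B k - A))) atTop
      (𝓝 (trace (Aᵀ * A) - 0)) := htrlim.sub herrlim
  have := le_of_tendsto this (Filter.Eventually.of_forall hineq)
  linarith


/-- The Frobenius norm of a real matrix: `‖A‖ = sqrt (trace (Aᵀ A))`. -/
noncomputable def frobNorm {m n : Type*} [Fintype m] [Fintype n]
    (A : Matrix m n ℝ) : ℝ :=
  Real.sqrt (Matrix.trace (Aᵀ * A))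

/-- For frames `M, N` with orthonormal columns, there is an orthogonal matrix `Ω`
with `‖MΩ - N‖ ≤ ‖M Mᵀ - N Nᵀ‖` in the Frobenius norm. -/
theorem exists_orthogonal_align
    (n d : ℕ) (M N : Matrix (Fin n) (Fin d) ℝ)
    (hM : Mᵀ * M = 1) (hN : Nᵀ * N = 1) :
    ∃ Ω : Matrix (Fin d) (Fin d) ℝ, Ω * Ωᵀ = 1 ∧
      frobNorm (M * Ω - N) ≤ frobNorm (M * Mᵀ - N * Nᵀ) := by
  set A : Matrix (Fin d) (Fin d) ℝ := Mᵀ * N with hA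
  have hMM : M * Mᵀ * (M * Mᵀ) = M * Mᵀ := by
    rw [← Matrix.mul_assoc, Matrix.mul_assoc M Mᵀ M, hM, Matrix.mul_one]
  have hproj : (1 - M * Mᵀ) * (1 - M * Mᵀ) = 1 - M * Mᵀ := by
    rw [Matrix.sub_mul, Matrix.one_mul, Matrix.mul_sub, Matrix.mul_one, hMM]
    abel
  have hAtA : Aᵀ * A = Nᵀ * (M * (Mᵀ * N)) := by
    rw [hA, transpose_mul, transpose_transpose, Matrix.mul_assoc]
  have h1 : (1 - Aᵀ * A).PosSemidef := by
    have hps := posSemidef_conjTranspose_mul_self ((1 - M * Mᵀ) * N)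
    rw [conjTranspose_eq_transpose_of_trivial] at hps
    have hsym : (1 - M * Mᵀ)ᵀ = 1 - M * Mᵀ := by
      rw [transpose_sub, transpose_one, transpose_mul, transpose_transpose]
    have heq : ((1 - M * Mᵀ) * N)ᵀ * ((1 - M * Mᵀ) * N) = 1 - Aᵀ * A := by
      rw [transpose_mul, hsym, Matrix.mul_assoc Nᵀ (1 - M * Mᵀ) ((1 - M * Mᵀ) * N),
        ← Matrix.mul_assoc (1 - M * Mᵀ) (1 - M * Mᵀ) N, hproj, Matrix.sub_mul, Matrix.one_mul,
        Matrix.mul_sub, hN, hAtA, Matrix.mul_assoc M Mᵀ N]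
    rwa [heq] at hps
  obtain ⟨Ω, hΩ, hineq⟩ := exists_orth_gen h1
  refine ⟨Ω, hΩ, ?_⟩
  unfold frobNorm
  apply Real.sqrt_le_sqrt
  have e1 : (M * Ω - N)ᵀ * (M * Ω - N)
      = Ωᵀ * Mᵀ * (M * Ω) - Ωᵀ * Mᵀ * N - Nᵀ * (M * Ω) + Nᵀ * N := by
    rw [transpose_sub, transpose_mul, Matrix.sub_mul, Matrix.mul_sub, Matrix.mul_sub]
    abel
  have t1 : trace (Ωᵀ * Mᵀ * (M * Ω)) = (d : ℝ) := by
    rw [← Matrix.mul_assoc, Matrix.mul_assoc Ωᵀ Mᵀ M, hM, Matrix.mul_one, trace_mul_comm, hΩ,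
      trace_one]
    simp
  have t2 : trace (Ωᵀ * Mᵀ * N) = trace (Ωᵀ * A) := by rw [Matrix.mul_assoc, hA]
  have t3 : trace (Nᵀ * (M * Ω)) = trace (Ωᵀ * A) := by
    rw [hA, ← Matrix.mul_assoc, ← trace_transpose (Ωᵀ * (Mᵀ * N)), transpose_mul,
      transpose_transpose, transpose_mul, transpose_transpose]
  have t4 : trace (Nᵀ * N) = (d : ℝ) := by rw [hN, trace_one]; simp
  have lhs_eq : trace ((M * Ω - N)ᵀ * (M * Ω - N)) = 2 * d - 2 * trace (Ωᵀ * A) := by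
    rw [e1, trace_add, trace_sub, trace_sub, t1, t2, t3, t4]
    ring
  have e2 : (M * Mᵀ - N * Nᵀ)ᵀ * (M * Mᵀ - N * Nᵀ)
      = M * Mᵀ * (M * Mᵀ) - M * Mᵀ * (N * Nᵀ) - N * Nᵀ * (M * Mᵀ) + N * Nᵀ * (N * Nᵀ) := by
    rw [transpose_sub, transpose_mul, transpose_mul, transpose_transpose, transpose_transpose,
      Matrix.sub_mul, Matrix.mul_sub, Matrix.mul_sub]
    abel
  have s1 : trace (M * Mᵀ * (M * Mᵀ)) = (d : ℝ) := by
    rw [hMM, trace_mul_comm, hM, trace_one]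
    simp
  have s4 : trace (N * Nᵀ * (N * Nᵀ)) = (d : ℝ) := by
    rw [← Matrix.mul_assoc, Matrix.mul_assoc N Nᵀ N, hN, Matrix.mul_one, trace_mul_comm, hN,
      trace_one]
    simp
  have s2 : trace (M * Mᵀ * (N * Nᵀ)) = trace (Aᵀ * A) := by
    rw [hAtA, ← Matrix.mul_assoc]
    conv_lhs => rw [trace_mul_comm]
    rw [Matrix.mul_assoc M Mᵀ N]
  have s3 : trace (N * Nᵀ * (M * Mᵀ)) = trace (Aᵀ * A) := by
    conv_lhs => rw [trace_mul_comm]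
    exact s2
  have rhs_eq : trace ((M * Mᵀ - N * Nᵀ)ᵀ * (M * Mᵀ - N * Nᵀ)) = 2 * d - 2 * trace (Aᵀ * A) := by
    rw [e2, trace_add, trace_sub, trace_sub, s1, s2, s3, s4]
    ring
  rw [lhs_eq, rhs_eq]
  linarith
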